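/- Let (X,d) be a metric space with intrinsic metric. Then for all nonempty bounded subsets M, W of X and all real numbers r > 0, R > 0 one has hausdorffDist(cthickening r M, cthickening R W) ≤ hausdorffDist(M,W) + |R − r|. -/

import Mathlib

open Metric Bornology

lemma mem_cthickening_iff_infDist_le' {X : Type*} [MetricSpace X]
    {S : Set X} (hS : S.Nonempty) {δ : ℝ} (hδ : 0 ≤ δ) (x : X) :
    x ∈ cthickening δ S ↔ infDist x S ≤ δ := by
  rw [mem_cthickening_iff,
    ENNReal.le_ofReal_iff_toReal_le (infEdist_ne_top hS) hδ, infDist]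

lemma infDist_cthickening_le_aux {X : Type*} [MetricSpace X]
    (hintr : ∀ x y : X, ∀ ε > (0 : ℝ), ∃ (k : ℕ) (z : ℕ → X), z 0 = x ∧ z k = y ∧
      (∀ i < k, dist (z i) (z (i + 1)) < ε) ∧
      (∑ i ∈ Finset.range k, dist (z i) (z (i + 1))) < dist x y + ε)
    {S : Set X} (hS : S.Nonempty) (x : X) {r : ℝ} (hr : 0 < r) :
    infDist x (cthickening r S) ≤ max (infDist x S - r) 0 := by
  by_cases h : infDist x S ≤ r
  · have hx : x ∈ cthickening r S := by
      exact (mem_cthickening_iff_infDist_le' hS hr.le x).2 h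
    simp [infDist_zero_of_mem hx]
  push_neg at h
  refine le_trans ?_ (le_max_left _ _)
  refine le_of_forall_pos_le_add (fun δ hδ => ?_)
  have hε : (0:ℝ) < δ/4 := by linarith
  obtain ⟨w, hwS, hw⟩ := (infDist_lt_iff hS).1 (show infDist x S < infDist x S + δ/4 by linarith)
  obtain ⟨k, z, hz0, hzk, hstep, hsum⟩ := hintr x w (δ/4) hε
  set t : ℕ → ℝ := fun i => ∑ j ∈ Finset.Ico i k, dist (z j) (z (j+1)) with ht
  have key : ∀ i ≤ k, dist (z i) w ≤ t i := by
    intro i hik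
    have h1 : dist (z (i+0)) (z (i+(k-i))) ≤
        ∑ j ∈ Finset.range (k-i), dist (z (i+j)) (z (i+j+1)) := by
      exact dist_le_range_sum_dist (fun j => z (i + j)) (k - i)
    rw [Nat.add_zero, Nat.add_sub_cancel' hik, hzk] at h1
    show dist (z i) w ≤ ∑ j ∈ Finset.Ico i k, dist (z j) (z (j+1))
    rw [Finset.sum_Ico_eq_sum_range]
    exact h1
  have hex : ∃ i, t i ≤ r := ⟨k, by simp [ht, hr.le]⟩
  set i := Nat.find hex with hi
  have hti : t i ≤ r := Nat.find_spec hex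
  have hik : i ≤ k := Nat.find_le (by simp [ht, hr.le] : t k ≤ r)
  have hi0 : i ≠ 0 := by
    intro h0
    have : dist x w ≤ t 0 := by rw [← hz0]; exact key 0 (Nat.zero_le _)
    have h2 : infDist x S ≤ dist x w := infDist_le_dist_of_mem hwS
    rw [h0] at hti
    linarith
  obtain ⟨i', hii'⟩ := Nat.exists_eq_succ_of_ne_zero hi0
  rw [hii'] at hti hik
  have hti' : r < t i' := lt_of_not_ge (Nat.find_min hex (by rw [← hi, hii']; exact Nat.lt_succ_self i'))
  have hi'k : i' < k := lt_of_lt_of_le (Nat.lt_succ_self i') hik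
  have hsplit : t i' = dist (z i') (z (i'+1)) + t (i'+1) := by
    rw [ht]; exact Finset.sum_eq_sum_Ico_succ_bot hi'k _
  have hstep' : dist (z i') (z (i'+1)) < δ/4 := hstep i' hi'k
  have hlb : r - δ/4 < t (i'+1) := by linarith
  -- z (i'+1) ∈ cthickening r S
  have hmem : z (i'+1) ∈ cthickening r S := by
    rw [mem_cthickening_iff_infDist_le' hS hr.le]
    calc infDist (z (i'+1)) S ≤ dist (z (i'+1)) w := infDist_le_dist_of_mem hwS
      _ ≤ t (i'+1) := key _ hik
      _ ≤ r := hti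
  have hdx : dist x (z (i'+1)) ≤ ∑ j ∈ Finset.range (i'+1), dist (z j) (z (j+1)) := by
    rw [← hz0]; exact dist_le_range_sum_dist z (i'+1)
  have htot : ∑ j ∈ Finset.range (i'+1), dist (z j) (z (j+1)) + t (i'+1)
      = ∑ j ∈ Finset.range k, dist (z j) (z (j+1)) :=
    Finset.sum_range_add_sum_Ico _ hik
  have : dist x (z (i'+1)) < infDist x S - r + δ := by
    have h5 : ∑ j ∈ Finset.range k, dist (z j) (z (j+1)) < dist x w + δ/4 := hsum
    nlinarith [dist_nonneg (x := x) (y := z (i'+1))]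
  calc infDist x (cthickening r S) ≤ dist x (z (i'+1)) := infDist_le_dist_of_mem hmem
    _ ≤ infDist x S - r + δ := this.le

/-- In a space with intrinsic metric, the Hausdorff distance between generalized closed
balls (closed thickenings) is bounded by `hausdorffDist M W + |R - r|`. -/
theorem hausdorffDist_cthickening_le {X : Type*} [MetricSpace X]
    (hintr : ∀ x y : X, ∀ ε > (0 : ℝ), ∃ (k : ℕ) (z : ℕ → X), z 0 = x ∧ z k = y ∧
      (∀ i < k, dist (z i) (z (i + 1)) < ε) ∧
      (∑ i ∈ Finset.range k, dist (z i) (z (i + 1))) < dist x y + ε)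
    (M W : Set X) (hM : M.Nonempty) (hMb : IsBounded M)
    (hW : W.Nonempty) (hWb : IsBounded W)
    (r R : ℝ) (hr : 0 < r) (hR : 0 < R) :
    hausdorffDist (cthickening r M) (cthickening R W) ≤ hausdorffDist M W + |R - r| := by
  have hDnn : 0 ≤ hausdorffDist M W := hausdorffDist_nonneg
  have habs : 0 ≤ |R - r| := abs_nonneg _
  have hne : hausdorffEDist M W ≠ ⊤ :=
    hausdorffEdist_ne_top_of_nonempty_of_bounded hM hW hMb hWb
  have hne' : hausdorffEDist W M ≠ ⊤ := by
    rwa [EMetric.hausdorffEdist_comm]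
  apply hausdorffDist_le_of_infDist (by linarith)
  · intro x hx
    have h1 : infDist x M ≤ r := (mem_cthickening_iff_infDist_le' hM hr.le x).1 hx
    have h2 : infDist x W ≤ infDist x M + hausdorffDist M W :=
      infDist_le_infDist_add_hausdorffDist hne
    have h3 := infDist_cthickening_le_aux hintr hW x hR
    have h4 : r - R ≤ |R - r| := by
      rw [abs_sub_comm]; exact le_abs_self _
    rcases le_or_gt (infDist x W - R) 0 with h | h
    · rw [max_eq_right h] at h3; linarith
    · rw [max_eq_left h.le] at h3; linarith
  · intro y hy
    have h1 : infDist y W ≤ R := (mem_cthickening_iff_infDist_le' hW hR.le y).1 hy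
    have h2 : infDist y M ≤ infDist y W + hausdorffDist W M :=
      infDist_le_infDist_add_hausdorffDist hne'
    have h3 := infDist_cthickening_le_aux hintr hM y hr
    have h4 : R - r ≤ |R - r| := le_abs_self _
    have hcomm : hausdorffDist W M = hausdorffDist M W := hausdorffDist_comm
    rcases le_or_gt (infDist y M - r) 0 with h | h
    · rw [max_eq_right h] at h3; linarith
    · rw [max_eq_left h.le] at h3; linarith
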